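/- For r ≥ 1, the sum over k = 1, …, 2^{r−1} − 1 of the tropical angles ∠^c C(λ_{k−1}) C(λ_k) C(λ_{k+1}), where λ_k = 4k/2^r and C(λ_k) ∈ ℝ^{3} is the vector (u_r(λ_k), z_r(λ_k), z'_r(λ_k)) of the tropical staircase construction, equals (2^{r−1} − 1)·(π/2); i.e., at each interior λ_k consecutive points have strictly increasing maxima, attained on disjoint argmax sets (z_r for k even, z'_r for k odd). -/

import Mathlib

open scoped Classical

/-- The maximal coordinate of a vector in `ℝ³`. -/
noncomputable def maxCoord (U : Fin 3 → ℝ) : ℝ :=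
  Finset.univ.sup' Finset.univ_nonempty U

/-- The tropical angle `∠ᶜ U V W`: equal to `π/2` if `max U < max V < max W` and the
argmax sets of `V` and `W` are disjoint, and `0` otherwise. -/
noncomputable def tropAngle (U V W : Fin 3 → ℝ) : ℝ :=
  if maxCoord U < maxCoord V ∧ maxCoord V < maxCoord W ∧
      ∀ i, ¬(V i = maxCoord V ∧ W i = maxCoord W)
  then Real.pi / 2 else 0

/-- Iterated tent map. -/
noncomputable def tent : ℕ → ℝ → ℝ
  | 0, x => x
  | (i+1), x => tent i (1 - |2*x - 1|)

lemma tent_succ' (i : ℕ) (x : ℝ) : tent (i+1) x = 1 - |2 * tent i x - 1| := by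
  induction i generalizing x with
  | zero => simp [tent]
  | succ n ih =>
      have h1 : tent (n+2) x = tent (n+1) (1 - |2*x - 1|) := rfl
      rw [h1, ih, show tent (n+1) x = tent n (1 - |2*x - 1|) from rfl]

lemma tent_dyadic (i : ℕ) : ∀ m : ℕ, m ≤ 2^i →
    tent i ((m:ℝ)/2^i) = if m % 2 = 0 then 0 else 1 := by
  induction i with
  | zero =>
      intro m hm
      interval_cases m <;> simp [tent]
  | succ i ih =>
      intro m hm
      by_cases h : m ≤ 2^i
      · have h2 : tent (i+1) ((m:ℝ)/2^(i+1)) = tent i ((m:ℝ)/2^i) := by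
          show tent i _ = _
          congr 1
          have hle : (m:ℝ)/2^i ≤ 1 := by
            rw [div_le_one (by positivity)]
            exact_mod_cast (by exact_mod_cast h : (m:ℝ) ≤ (2^i : ℕ))
          have : |2 * ((m:ℝ)/2^(i+1)) - 1| = 1 - (m:ℝ)/2^i := by
            rw [abs_sub_comm, abs_of_nonneg]
            · ring_nf
            · have : 2 * ((m:ℝ)/2^(i+1)) = (m:ℝ)/2^i := by ring
              linarith [this ▸ hle]
          rw [this]; ring
        rw [h2, ih m h]
      · push_neg at h
        set m' := 2^(i+1) - m with hm'
        have hm'le : m' ≤ 2^i := by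
          have : 2^(i+1) = 2*2^i := by ring
          omega
        have hcast : ((m':ℕ):ℝ) = 2^(i+1) - (m:ℝ) := by
          have : (m:ℕ) ≤ 2^(i+1) := hm
          push_cast [hm', this]; ring
        have h2 : tent (i+1) ((m:ℝ)/2^(i+1)) = tent i ((m':ℝ)/2^i) := by
          show tent i _ = _
          congr 1
          have hge : (1:ℝ) ≤ (m:ℝ)/2^i := by
            rw [le_div_iff₀ (by positivity)]
            have : (2^i:ℝ) < m := by exact_mod_cast (by exact_mod_cast h : ((2^i:ℕ):ℝ) < m)
            linarith
          have habs : |2 * ((m:ℝ)/2^(i+1)) - 1| = (m:ℝ)/2^i - 1 := by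
            rw [abs_of_nonneg]
            · ring_nf
            · have : 2 * ((m:ℝ)/2^(i+1)) = (m:ℝ)/2^i := by ring
              linarith [this ▸ hge]
          rw [habs, hcast]
          field_simp
          ring
        have hpar : m' % 2 = m % 2 := by
          have : 2^(i+1) = 2*2^i := by ring
          omega
        rw [h2, ih m' hm'le, hpar]

lemma key_uv (u v : ℕ → ℝ → ℝ)
    (hu0 : ∀ l : ℝ, u 0 l = 1) (hv0 : ∀ l : ℝ, v 0 l = min 2 l)
    (hu : ∀ (i : ℕ) (l : ℝ), u (i + 1) l = 1 + min (u i l) (v i l))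
    (hv : ∀ (i : ℕ) (l : ℝ), v (i + 1) l = 1 - 1 / 2 ^ (i + 1) + max (u i l) (v i l))
    (i : ℕ) (l : ℝ) (h2 : l ≤ 2) :
    u i l + v i l = l + 2*i + (1/2:ℝ)^i ∧
    v i l - u i l = (1 - 2 * tent i (1 - l/2)) * (1/2:ℝ)^i := by
  induction i with
  | zero =>
      rw [hu0, hv0, min_eq_right h2]
      constructor
      · push_cast; ring
      · simp [tent]; ring
  | succ i ih =>
      obtain ⟨hs, hd⟩ := ih
      have hminmax : min (u i l) (v i l) + max (u i l) (v i l) = u i l + v i l :=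
        min_add_max _ _
      have habs : max (u i l) (v i l) - min (u i l) (v i l) = |v i l - u i l| :=
        (max_sub_min_eq_abs' _ _).trans (abs_sub_comm _ _)
      have habs2 : |v i l - u i l| = |1 - 2 * tent i (1 - l/2)| * (1/2:ℝ)^i := by
        rw [hd, abs_mul, abs_of_nonneg (by positivity : (0:ℝ) ≤ (1/2:ℝ)^i)]
      have hpow : (1:ℝ) / 2 ^ (i+1) = (1/2:ℝ)^(i+1) := by
        rw [div_pow]; norm_num
      have habs3 : |1 - 2 * tent i (1 - l/2)| = |2 * tent i (1 - l/2) - 1| :=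
        abs_sub_comm _ _
      constructor
      · rw [hu i l, hv i l]
        push_cast
        rw [hpow, pow_succ]
        linarith
      · rw [hu i l, hv i l, tent_succ', hpow, pow_succ]
        rw [habs3] at habs2
        linarith [habs2 ▸ habs]

lemma uv_vals (u v : ℕ → ℝ → ℝ)
    (hu0 : ∀ l : ℝ, u 0 l = 1) (hv0 : ∀ l : ℝ, v 0 l = min 2 l)
    (hu : ∀ (i : ℕ) (l : ℝ), u (i + 1) l = 1 + min (u i l) (v i l))
    (hv : ∀ (i : ℕ) (l : ℝ), v (i + 1) l = 1 - 1 / 2 ^ (i + 1) + max (u i l) (v i l))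
    (s j : ℕ) (hj : j ≤ 2^(s+1)) :
    u (s+1) (4*(j:ℝ)/2^(s+2)) = (s:ℝ)+1 + (2*j + (if j % 2 = 0 then 0 else 2))/2^(s+2) ∧
    v (s+1) (4*(j:ℝ)/2^(s+2)) = (s:ℝ)+1 + (2*j + (if j % 2 = 0 then 2 else 0))/2^(s+2) := by
  set l : ℝ := 4*(j:ℝ)/2^(s+2) with hl
  have hjR : (j:ℝ) ≤ 2^(s+1) := by exact_mod_cast hj
  have h2 : l ≤ 2 := by
    rw [hl, div_le_iff₀ (by positivity)]
    have : (2:ℝ)^(s+2) = 2*2^(s+1) := by ring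
    rw [this]; linarith
  obtain ⟨hs, hd⟩ := key_uv u v hu0 hv0 hu hv (s+1) l h2
  have hfold : 1 - l/2 = ((2^(s+1) - j : ℕ):ℝ)/2^(s+1) := by
    push_cast [hj]
    rw [hl]
    field_simp
    ring
  have htent : tent (s+1) (1 - l/2) = if j % 2 = 0 then 0 else 1 := by
    rw [hfold, tent_dyadic (s+1) _ (by omega)]
    have hpow2 : 2^(s+1) % 2 = 0 := by
      have : 2^(s+1) = 2*2^s := by ring
      omega
    have hmod : (2^(s+1) - j) % 2 = j % 2 := by omega
    rw [hmod]
  have hpow : ((1:ℝ)/2)^(s+1) = 2/2^(s+2) := by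
    rw [div_pow]
    have : (2:ℝ)^(s+2) = 2^(s+1)*2 := by ring
    rw [this, one_pow]; field_simp
  rw [htent] at hd
  rw [hpow] at hs hd
  have h2pos : (0:ℝ) < 2^(s+2) := by positivity
  have hlt : l = 4*(j:ℝ) * ((2:ℝ)^(s+2))⁻¹ := by rw [hl]; ring
  have hpow' : (2:ℝ)/2^(s+2) = 2 * ((2:ℝ)^(s+2))⁻¹ := by ring
  rw [hpow'] at hs hd
  push_cast at hs
  by_cases hpar : j % 2 = 0
  · rw [if_pos hpar] at hd
    simp only [if_pos hpar]
    constructor <;> (rw [div_eq_mul_inv]; push_cast; linarith)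
  · rw [if_neg hpar] at hd
    simp only [if_neg hpar]
    constructor <;> (rw [div_eq_mul_inv]; push_cast; linarith)


lemma maxCoord_eq (x y w : ℝ) : maxCoord ![x, y, w] = max x (max y w) := by
  rw [maxCoord]
  refine le_antisymm (Finset.sup'_le _ _ ?_)
    (max_le (Finset.le_sup' ![x, y, w] (Finset.mem_univ (0 : Fin 3)))
      (max_le (Finset.le_sup' ![x, y, w] (Finset.mem_univ (1 : Fin 3)))
        (Finset.le_sup' ![x, y, w] (Finset.mem_univ (2 : Fin 3)))))
  intro i _
  fin_cases i <;> simp [le_max_iff]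

theorem sum_trop_angles (r : ℕ) (hr : 1 ≤ r) (u v z z' : ℕ → ℝ → ℝ)
    (hu0 : ∀ l : ℝ, u 0 l = 1) (hv0 : ∀ l : ℝ, v 0 l = min 2 l)
    (hu : ∀ (i : ℕ) (l : ℝ), u (i + 1) l = 1 + min (u i l) (v i l))
    (hv : ∀ (i : ℕ) (l : ℝ), v (i + 1) l = 1 - 1 / 2 ^ (i + 1) + max (u i l) (v i l))
    (hz : ∀ l : ℝ, z r l = 1 + u (r - 1) l)
    (hz' : ∀ l : ℝ, z' r l = 1 + v (r - 1) l) :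
    ∑ k ∈ Finset.Ico (1 : ℕ) (2 ^ (r - 1)),
      tropAngle
        ![u r (4 * ((k : ℝ) - 1) / 2 ^ r), z r (4 * ((k : ℝ) - 1) / 2 ^ r),
          z' r (4 * ((k : ℝ) - 1) / 2 ^ r)]
        ![u r (4 * (k : ℝ) / 2 ^ r), z r (4 * (k : ℝ) / 2 ^ r),
          z' r (4 * (k : ℝ) / 2 ^ r)]
        ![u r (4 * ((k : ℝ) + 1) / 2 ^ r), z r (4 * ((k : ℝ) + 1) / 2 ^ r),
          z' r (4 * ((k : ℝ) + 1) / 2 ^ r)]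
      = ((2 ^ (r - 1) : ℝ) - 1) * (Real.pi / 2) := by
  rcases eq_or_lt_of_le hr with h1 | h1
  · rw [← h1]
    norm_num
  · obtain ⟨s, rfl⟩ : ∃ s, r = s + 2 := ⟨r - 2, by omega⟩
    clear hr h1
    have e21 : s + 2 - 1 = s + 1 := rfl
    rw [e21] at hz hz'
    simp only [e21]
    set A : ℕ → ℝ := fun j => (s:ℝ) + 2 + 2*(j:ℝ)/2^(s+2) with hA
    set B : ℕ → ℝ := fun j => (s:ℝ) + 2 + (2*(j:ℝ)+2)/2^(s+2) with hB
    have h2pos : (0:ℝ) < 2^(s+2) := by positivity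
    have hABlt : ∀ j : ℕ, A j < B j := by
      intro j
      rw [hA, hB]
      simp only [add_lt_add_iff_left]
      rw [div_lt_div_iff₀ h2pos h2pos]
      nlinarith
    have hABne : ∀ j : ℕ, A j ≠ B j := fun j => ne_of_lt (hABlt j)
    have hBmono : ∀ j j' : ℕ, j < j' → B j < B j' := by
      intro j j' h
      rw [hB]
      have hlt : (j:ℝ) < j' := by exact_mod_cast h
      simp only [add_lt_add_iff_left]
      rw [div_lt_div_iff₀ h2pos h2pos]
      nlinarith
    have hvec : ∀ j : ℕ, j ≤ 2^(s+1) →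
        (![u (s+2) (4*(j:ℝ)/2^(s+2)), z (s+2) (4*(j:ℝ)/2^(s+2)),
           z' (s+2) (4*(j:ℝ)/2^(s+2))] : Fin 3 → ℝ)
          = if j % 2 = 0 then ![A j, A j, B j] else ![A j, B j, A j] := by
      intro j hj
      obtain ⟨hu1, hv1⟩ := uv_vals u v hu0 hv0 hu hv s j hj
      have hur : u (s+2) (4*(j:ℝ)/2^(s+2))
          = 1 + min (u (s+1) (4*(j:ℝ)/2^(s+2))) (v (s+1) (4*(j:ℝ)/2^(s+2))) := hu (s+1) _
      rw [hz, hz', hur]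
      by_cases hpar : j % 2 = 0
      · rw [if_pos hpar]
        rw [if_pos hpar] at hu1 hv1
        have hle : u (s+1) (4*(j:ℝ)/2^(s+2)) ≤ v (s+1) (4*(j:ℝ)/2^(s+2)) := by
          rw [hu1, hv1]
          have : (2*(j:ℝ)+0)/2^(s+2) ≤ (2*(j:ℝ)+2)/2^(s+2) :=
            (div_le_div_iff_of_pos_right h2pos).mpr (by linarith)
          linarith
        rw [min_eq_left hle, hu1, hv1]
        funext i
        fin_cases i <;>
          simp only [Matrix.cons_val_zero, Matrix.cons_val_one, Matrix.head_cons,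
            Matrix.cons_val_two, Matrix.tail_cons, hA, hB] <;> ring
      · rw [if_neg hpar]
        rw [if_neg hpar] at hu1 hv1
        have hle : v (s+1) (4*(j:ℝ)/2^(s+2)) ≤ u (s+1) (4*(j:ℝ)/2^(s+2)) := by
          rw [hu1, hv1]
          have : (2*(j:ℝ)+0)/2^(s+2) ≤ (2*(j:ℝ)+2)/2^(s+2) :=
            (div_le_div_iff_of_pos_right h2pos).mpr (by linarith)
          linarith
        rw [min_eq_right hle, hu1, hv1]
        funext i
        fin_cases i <;>
          simp only [Matrix.cons_val_zero, Matrix.cons_val_one, Matrix.head_cons,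
            Matrix.cons_val_two, Matrix.tail_cons, hA, hB] <;> ring
    have hmax : ∀ j : ℕ,
        maxCoord (if j % 2 = 0 then ![A j, A j, B j] else ![A j, B j, A j]) = B j := by
      intro j
      split
      · rw [maxCoord_eq, max_eq_right (le_of_lt (hABlt j)),
          max_eq_right (le_of_lt (hABlt j))]
      · rw [maxCoord_eq, max_eq_left (le_of_lt (hABlt j)),
          max_eq_right (le_of_lt (hABlt j))]
    have hterm : ∀ k ∈ Finset.Ico (1:ℕ) (2^(s+1)),
        tropAngle
          ![u (s+2) (4 * ((k : ℝ) - 1) / 2 ^ (s+2)), z (s+2) (4 * ((k : ℝ) - 1) / 2 ^ (s+2)),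
            z' (s+2) (4 * ((k : ℝ) - 1) / 2 ^ (s+2))]
          ![u (s+2) (4 * (k : ℝ) / 2 ^ (s+2)), z (s+2) (4 * (k : ℝ) / 2 ^ (s+2)),
            z' (s+2) (4 * (k : ℝ) / 2 ^ (s+2))]
          ![u (s+2) (4 * ((k : ℝ) + 1) / 2 ^ (s+2)), z (s+2) (4 * ((k : ℝ) + 1) / 2 ^ (s+2)),
            z' (s+2) (4 * ((k : ℝ) + 1) / 2 ^ (s+2))]
          = Real.pi / 2 := by
      intro k hk
      rw [Finset.mem_Ico] at hk
      obtain ⟨hk1, hk2⟩ := hk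
      have e1 : 4 * ((k:ℝ) - 1) / 2 ^ (s+2) = 4 * (((k-1:ℕ)):ℝ) / 2^(s+2) := by
        push_cast [hk1]; ring
      have e3 : 4 * ((k:ℝ) + 1) / 2 ^ (s+2) = 4 * (((k+1:ℕ)):ℝ) / 2^(s+2) := by
        push_cast; ring
      rw [e1, e3, hvec (k-1) (by omega), hvec k (by omega), hvec (k+1) (by omega)]
      rw [tropAngle, hmax (k-1), hmax k, hmax (k+1), if_pos]
      refine ⟨hBmono _ _ (by omega), hBmono _ _ (by omega), ?_⟩
      intro i
      by_cases hp : k % 2 = 0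
      · rw [if_pos hp, if_neg (by omega : ¬(k+1) % 2 = 0)]
        fin_cases i <;> simp [hABne k, hABne (k+1)]
      · rw [if_neg hp, if_pos (by omega : (k+1) % 2 = 0)]
        fin_cases i <;> simp [hABne k, hABne (k+1)]
    rw [Finset.sum_congr rfl hterm, Finset.sum_const, Nat.card_Ico, nsmul_eq_mul,
      Nat.cast_sub Nat.one_le_two_pow]
    push_cast
    ring
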